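/- For every n ≥ 0 and every j,k ∈ {0,…,n}, the sum over compositions l_1+⋯+l_{j+1} = n with l_1,…,l_j ∈ ℕ_{≥1} and l_{j+1} ∈ ℕ_{≥0} of the coefficient of t^k in (t^{(l_1)}/l_1!)⋯(t^{(l_j)}/l_j!) · [(t+1)(t+3)⋯(t+2l_{j+1}−1)/(2^{l_{j+1}} l_{j+1}!)] equals (2^j j!)/(2^n n!) · B(n,k) · S_B(k,j), where B and S_B are the B-analogues of the Stirling numbers of the first and second kind. -/

import Mathlib

/-- The Stirling numbers of the second kind. -/
def stirling2 : ℕ → ℕ → ℕ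
  | 0, 0 => 1
  | 0, _ + 1 => 0
  | _ + 1, 0 => 0
  | n + 1, k + 1 => (k + 1) * stirling2 n (k + 1) + stirling2 n k

/-- The `B`-analogues of the Stirling numbers of the first kind, defined via the recursion
corresponding to `(t+1)(t+3)⋯(t+2n-1) = ∑ₖ B(n,k) tᵏ`. -/
def stirlingB1 : ℕ → ℕ → ℕ
  | 0, 0 => 1
  | 0, _ + 1 => 0
  | n + 1, 0 => (2 * n + 1) * stirlingB1 n 0
  | n + 1, k + 1 => (2 * n + 1) * stirlingB1 n (k + 1) + stirlingB1 n k

/-- The `B`-analogue of the Stirling numbers of the second kind: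
`S_B(k,j) = Σ_{m=j}^{k} 2^{m−j} binom(k,m) S(m,j)`. -/
def stirlingB2 (n k : ℕ) : ℕ :=
  ∑ m ∈ Finset.Icc k n, 2 ^ (m - k) * n.choose m * stirling2 m k
open Finset

lemma stirling2_eq_zero : ∀ {m j : ℕ}, m < j → stirling2 m j = 0
  | 0, _ + 1, _ => rfl
  | m + 1, j + 1, h => by
      have h1 : m < j + 1 := by omega
      have h2 : m < j := by omega
      simp [stirling2, stirling2_eq_zero h1, stirling2_eq_zero h2]

lemma stirlingB1_eq_zero : ∀ {n k : ℕ}, n < k → stirlingB1 n k = 0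
  | 0, _ + 1, _ => rfl
  | n + 1, k + 1, h => by
      have h1 : n < k + 1 := by omega
      have h2 : n < k := by omega
      simp [stirlingB1, stirlingB1_eq_zero h1, stirlingB1_eq_zero h2]

lemma stirlingB2_eq_range (a b : ℕ) :
    stirlingB2 a b = ∑ m ∈ range (a + 1), 2 ^ (m - b) * a.choose m * stirling2 m b := by
  rw [stirlingB2]
  apply Finset.sum_subset
  · intro x hx
    rw [mem_Icc] at hx
    rw [mem_range]
    omega
  · intro x hx hx'
    rw [mem_range] at hx
    rw [mem_Icc] at hx'
    have : x < b := by omega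
    rw [stirling2_eq_zero this, mul_zero]

lemma stirlingB2_zero (k : ℕ) : stirlingB2 k 0 = 1 := by
  rw [stirlingB2_eq_range]
  rw [Finset.sum_eq_single 0]
  · simp [stirling2]
  · intro m _ hm
    obtain ⟨m, rfl⟩ := Nat.exists_eq_succ_of_ne_zero hm
    simp [stirling2]
  · simp

lemma stirlingB2_zero_succ (j : ℕ) : stirlingB2 0 (j + 1) = 0 := by
  rw [stirlingB2]
  rw [Finset.Icc_eq_empty (by omega)]
  simp

lemma stirlingB2_succ (k j : ℕ) :
    stirlingB2 (k + 1) (j + 1) = (2 * j + 3) * stirlingB2 k (j + 1) + stirlingB2 k j := by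
  have hA2 : ∑ i ∈ range (k + 1),
      2 ^ (i - j) * k.choose (i + 1) * stirling2 (i + 1) (j + 1) = stirlingB2 k (j + 1) := by
    have h0 : (2:ℕ) ^ (0 - (j+1)) * k.choose 0 * stirling2 0 (j + 1) = 0 := by
      simp [stirling2]
    have := Finset.sum_range_succ' (fun m => 2 ^ (m - (j+1)) * k.choose m * stirling2 m (j + 1)) (k + 1)
    rw [stirlingB2_eq_range]
    have hk1 : (2:ℕ) ^ ((k+1) - (j+1)) * k.choose (k+1) * stirling2 (k+1) (j + 1) = 0 := by
      simp [Nat.choose_succ_self]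
    calc ∑ i ∈ range (k + 1), 2 ^ (i - j) * k.choose (i + 1) * stirling2 (i + 1) (j + 1)
        = ∑ i ∈ range (k + 1), 2 ^ ((i+1) - (j+1)) * k.choose (i + 1) * stirling2 (i + 1) (j + 1) := by
          apply Finset.sum_congr rfl; intro i _; rw [Nat.succ_sub_succ]
      _ = ∑ m ∈ range (k + 2), 2 ^ (m - (j+1)) * k.choose m * stirling2 m (j + 1) := by
          rw [this, h0, add_zero]
      _ = ∑ m ∈ range (k + 1), 2 ^ (m - (j+1)) * k.choose m * stirling2 m (j + 1) := by
          rw [Finset.sum_range_succ, hk1, add_zero]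
  have hshift : ∀ i, 2 ^ (i - j) * k.choose i * stirling2 i (j+1)
      = 2 * (2 ^ (i - (j+1)) * k.choose i * stirling2 i (j + 1)) := by
    intro i
    rcases le_or_gt i j with hij | hij
    · rw [stirling2_eq_zero (by omega)]; ring
    · have : i - j = (i - (j+1)) + 1 := by omega
      rw [this, pow_succ]; ring
  calc stirlingB2 (k + 1) (j + 1)
      = ∑ m ∈ range (k + 2), 2 ^ (m - (j+1)) * (k+1).choose m * stirling2 m (j + 1) := by
        rw [stirlingB2_eq_range]
    _ = (∑ i ∈ range (k + 1), 2 ^ ((i+1) - (j+1)) * (k+1).choose (i+1) * stirling2 (i+1) (j + 1))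
        + 2 ^ (0 - (j+1)) * (k+1).choose 0 * stirling2 0 (j + 1) := by
        rw [Finset.sum_range_succ']
    _ = ∑ i ∈ range (k + 1), 2 ^ (i - j) * ((k.choose i + k.choose (i+1)) *
          ((j + 1) * stirling2 i (j + 1) + stirling2 i j)) := by
        simp only [stirling2, Nat.choose_succ_succ, Nat.succ_sub_succ, mul_zero, add_zero]
        apply Finset.sum_congr rfl; intro i _; ring
    _ = (∑ i ∈ range (k + 1), (j+1) * (2 ^ (i - j) * k.choose i * stirling2 i (j + 1)))
        + (∑ i ∈ range (k + 1), 2 ^ (i - j) * k.choose i * stirling2 i j)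
        + ((∑ i ∈ range (k + 1), 2 ^ (i - j) * k.choose (i+1) * stirling2 (i+1) (j + 1))) := by
        rw [← Finset.sum_add_distrib, ← Finset.sum_add_distrib]
        apply Finset.sum_congr rfl; intro i _
        simp only [stirling2]
        ring
    _ = (2 * j + 3) * stirlingB2 k (j + 1) + stirlingB2 k j := by
        rw [hA2, ← stirlingB2_eq_range]
        have : ∑ i ∈ range (k + 1), (j+1) * (2 ^ (i - j) * k.choose i * stirling2 i (j + 1))
            = (2*j+2) * stirlingB2 k (j+1) := by
          rw [stirlingB2_eq_range, Finset.mul_sum]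
          apply Finset.sum_congr rfl; intro i _
          rw [hshift i]; ring
        rw [this]; ring


noncomputable section
open Finset Polynomial PowerSeries

/-- rising factorial poly over factorial -/
def PP (l : ℕ) : Polynomial ℚ :=
  Polynomial.C ((l.factorial : ℚ)⁻¹) * ∏ m ∈ Finset.range l, (Polynomial.X + (m : Polynomial ℚ))

def QQ (l : ℕ) : Polynomial ℚ :=
  Polynomial.C (((2 ^ l * l.factorial : ℕ) : ℚ)⁻¹) *
    ∏ m ∈ Finset.range l, (Polynomial.X + ((2 * m + 1 : ℕ) : Polynomial ℚ))

def gg : PowerSeries (Polynomial ℚ) := PowerSeries.mk fun l => if l = 0 then 0 else PP l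
def hh : PowerSeries (Polynomial ℚ) := PowerSeries.mk QQ

lemma PP_zero : PP 0 = 1 := by simp [PP]
lemma QQ_zero : QQ 0 = 1 := by simp [QQ]
lemma PP_one : PP 1 = Polynomial.X := by simp [PP]

lemma PP_rec (l : ℕ) : ((l : ℚ) + 1) • PP (l + 1) = (Polynomial.X + (l : Polynomial ℚ)) * PP l := by
  rw [PP, PP, Finset.prod_range_succ, Polynomial.smul_eq_C_mul, ← mul_assoc, ← Polynomial.C_mul]
  have h : ((l : ℚ) + 1) * ((l + 1).factorial : ℚ)⁻¹ = ((l.factorial : ℚ))⁻¹ := by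
    rw [Nat.factorial_succ]
    push_cast
    rw [mul_inv]
    have : ((l : ℚ) + 1) ≠ 0 := by positivity
    field_simp
  rw [h]; ring

lemma QQ_rec (l : ℕ) : (2 * ((l : ℚ) + 1)) • QQ (l + 1)
    = (Polynomial.X + ((2 * l + 1 : ℕ) : Polynomial ℚ)) * QQ l := by
  rw [QQ, QQ, Finset.prod_range_succ, Polynomial.smul_eq_C_mul, ← mul_assoc, ← Polynomial.C_mul]
  have h : (2 * ((l : ℚ) + 1)) * (((2 ^ (l+1) * (l + 1).factorial : ℕ) : ℚ))⁻¹
      = (((2 ^ l * l.factorial : ℕ) : ℚ))⁻¹ := by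
    rw [Nat.factorial_succ, pow_succ]
    push_cast
    have h1 : ((l : ℚ) + 1) ≠ 0 := by positivity
    have h2 : ((l.factorial : ℚ)) ≠ 0 := by exact_mod_cast l.factorial_ne_zero
    have h3 : ((2:ℚ) ^ l) ≠ 0 := by positivity
    field_simp
  rw [h]; ring

lemma coeff_gg (n : ℕ) : (PowerSeries.coeff n) gg = if n = 0 then 0 else PP n := by
  simp [gg]

lemma coeff_hh (n : ℕ) : (PowerSeries.coeff n) hh = QQ n := by simp [hh]

abbrev R' := PowerSeries (Polynomial ℚ)

lemma coeff_derivativeFun' {R : Type*} [CommSemiring R] (f : PowerSeries R) (n : ℕ) :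
    PowerSeries.coeff n (PowerSeries.derivativeFun f) = PowerSeries.coeff (n + 1) f * (n + 1) :=
  PowerSeries.coeff_derivative f n

def Cp (p : Polynomial ℚ) : R' := PowerSeries.C p

lemma coeff_Cp_mul (p : Polynomial ℚ) (f : R') (n : ℕ) :
    (PowerSeries.coeff n) (Cp p * f) = p * (PowerSeries.coeff n) f :=
  PowerSeries.coeff_C_mul _ _ _

lemma d1 : ((1 : R') - PowerSeries.X) * (PowerSeries.derivativeFun gg)
    = Cp Polynomial.X * (gg + 1) := by
  refine PowerSeries.ext fun n => ?_
  rw [one_sub_mul, map_sub, coeff_Cp_mul, map_add]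
  cases n with
  | zero =>
    rw [PowerSeries.coeff_zero_X_mul, coeff_derivativeFun', coeff_gg, coeff_gg]
    simp [PP_one]
  | succ n =>
    rw [PowerSeries.coeff_succ_X_mul, coeff_derivativeFun', coeff_derivativeFun',
      coeff_gg, coeff_gg]
    simp only [Nat.succ_ne_zero, if_false, PowerSeries.coeff_one, add_zero]
    have h1 := PP_rec (n + 1)
    rw [Polynomial.smul_eq_C_mul] at h1
    simp only [map_add, map_one, Polynomial.C_eq_natCast] at h1
    push_cast at h1 ⊢
    linear_combination h1

lemma d2 : Cp 2 * (((1 : R') - PowerSeries.X) * (PowerSeries.derivativeFun hh))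
    = Cp (Polynomial.X + 1) * hh := by
  refine PowerSeries.ext fun n => ?_
  rw [coeff_Cp_mul, one_sub_mul, map_sub, coeff_Cp_mul]
  cases n with
  | zero =>
    rw [PowerSeries.coeff_zero_X_mul, coeff_derivativeFun', coeff_hh, coeff_hh]
    have h1 := QQ_rec 0
    rw [Polynomial.smul_eq_C_mul] at h1
    simp only [map_add, map_mul, map_one, map_ofNat, Polynomial.C_eq_natCast, Nat.cast_zero, map_zero] at h1
    push_cast at h1 ⊢
    linear_combination h1
  | succ n =>
    rw [PowerSeries.coeff_succ_X_mul, coeff_derivativeFun', coeff_derivativeFun',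
      coeff_hh, coeff_hh]
    have h1 := QQ_rec (n + 1)
    have h2 := QQ_rec n
    rw [Polynomial.smul_eq_C_mul] at h1 h2
    simp only [map_add, map_mul, map_one, map_ofNat, Polynomial.C_eq_natCast] at h1 h2
    push_cast at h1 h2 ⊢
    linear_combination h1
def FF (n j : ℕ) : Polynomial ℚ := (PowerSeries.coeff n) (gg ^ j * hh)

lemma coeff_X_mul_deriv (f : R') (n : ℕ) :
    (PowerSeries.coeff n) (PowerSeries.X * PowerSeries.derivativeFun f)
      = (PowerSeries.coeff n) f * (n : Polynomial ℚ) := by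
  cases n with
  | zero => rw [PowerSeries.coeff_zero_X_mul]; simp
  | succ n =>
    rw [PowerSeries.coeff_succ_X_mul, coeff_derivativeFun']
    push_cast
    ring

lemma coeff_one_sub_X_mul_deriv (f : R') (n : ℕ) :
    (PowerSeries.coeff n) (((1 : R') - PowerSeries.X) * PowerSeries.derivativeFun f)
      = (PowerSeries.coeff (n+1)) f * ((n : Polynomial ℚ) + 1)
        - (PowerSeries.coeff n) f * (n : Polynomial ℚ) := by
  rw [one_sub_mul, map_sub, coeff_X_mul_deriv, coeff_derivativeFun']

lemma SS (j : ℕ) : Cp 2 * (((1 : R') - PowerSeries.X)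
      * (PowerSeries.derivativeFun (gg ^ (j+1) * hh)))
    = Cp (Polynomial.X + 1) * (gg ^ (j+1) * hh)
      + (j+1) • (Cp 2 * Cp Polynomial.X * (gg ^ (j+1) * hh + gg ^ j * hh)) := by
  have hpow : ∀ m : ℕ, PowerSeries.derivativeFun (gg ^ (m+1))
      = ((m:R') + 1) * (gg ^ m * PowerSeries.derivativeFun gg) := by
    intro m
    induction m with
    | zero => simp [pow_one]
    | succ m ih =>
      rw [pow_succ (n := m + 1), PowerSeries.derivativeFun_mul, ih]
      push_cast
      simp only [smul_eq_mul]
      ring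
  rw [PowerSeries.derivativeFun_mul, hpow]
  simp only [smul_eq_mul, nsmul_eq_mul]
  push_cast
  linear_combination (gg ^ (j+1)) * d2
    + (Cp 2 * (((j:R')+1)) * hh * gg ^ j) * d1


lemma Frec (n j : ℕ) :
    2 * (FF (n+1) (j+1) * ((n : Polynomial ℚ) + 1) - FF n (j+1) * (n : Polynomial ℚ))
      = (Polynomial.X + 1) * FF n (j+1)
        + (j+1) • (2 * Polynomial.X * (FF n (j+1) + FF n j)) := by
  have h := congrArg (PowerSeries.coeff n) (SS j)
  rw [coeff_Cp_mul, coeff_one_sub_X_mul_deriv, map_add, coeff_Cp_mul, map_nsmul,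
    mul_assoc (Cp 2), coeff_Cp_mul, coeff_Cp_mul, map_add, ← mul_assoc] at h
  exact h

lemma Frec0 (n : ℕ) :
    2 * (FF (n+1) 0 * ((n : Polynomial ℚ) + 1) - FF n 0 * (n : Polynomial ℚ))
      = (Polynomial.X + 1) * FF n 0 := by
  have h := congrArg (PowerSeries.coeff n) d2
  rw [coeff_Cp_mul, coeff_one_sub_X_mul_deriv, coeff_Cp_mul] at h
  simp only [FF, pow_zero, one_mul]
  exact h
def NN (n j : ℕ) : Polynomial ℚ :=
  ∑ k ∈ range (n + 1), Polynomial.monomial k ((stirlingB1 n k : ℚ) * (stirlingB2 k j : ℚ))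

lemma coeff_NN (n j k : ℕ) :
    (NN n j).coeff k = if k ≤ n then (stirlingB1 n k : ℚ) * (stirlingB2 k j : ℚ) else 0 := by
  rw [NN, Polynomial.finset_sum_coeff]
  simp only [Polynomial.coeff_monomial]
  rw [Finset.sum_ite_eq' (range (n+1)) k]
  simp [Nat.lt_succ_iff]

lemma NN_succ_zero (n : ℕ) :
    NN (n+1) 0 = Polynomial.C (2*(n:ℚ)+1) * NN n 0 + Polynomial.X * NN n 0 := by
  ext k
  rw [Polynomial.coeff_add, Polynomial.coeff_C_mul, coeff_NN, coeff_NN]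
  cases k with
  | zero =>
    rw [Polynomial.mul_coeff_zero, Polynomial.coeff_X_zero, zero_mul, add_zero]
    simp only [Nat.zero_le, if_true]
    have : stirlingB1 (n+1) 0 = (2*n+1) * stirlingB1 n 0 := rfl
    rw [this]
    push_cast
    ring
  | succ k =>
    rw [Polynomial.coeff_X_mul, coeff_NN]
    rcases Nat.lt_or_ge k n with hk | hk
    · have h1 : k + 1 ≤ n + 1 := by omega
      have h2 : k + 1 ≤ n := by omega
      have h3 : k ≤ n := by omega
      rw [if_pos h1, if_pos h2, if_pos h3]
      have : stirlingB1 (n+1) (k+1) = (2*n+1) * stirlingB1 n (k+1) + stirlingB1 n k := rfl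
      rw [this, stirlingB2_zero, stirlingB2_zero]
      push_cast; ring
    · rcases Nat.eq_or_lt_of_le hk with hk' | hk'
      · rw [if_pos (by omega : k+1 ≤ n+1), if_neg (by omega : ¬ (k+1 ≤ n)),
          if_pos (by omega : k ≤ n)]
        have : stirlingB1 (n+1) (k+1) = (2*n+1) * stirlingB1 n (k+1) + stirlingB1 n k := rfl
        rw [this, stirlingB1_eq_zero (by omega : n < k+1), stirlingB2_zero, stirlingB2_zero]
        push_cast; ring
      · rw [if_neg (by omega), if_neg (by omega), if_neg (by omega)]
        ring

lemma NN_succ_succ (n j : ℕ) :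
    NN (n+1) (j+1) = Polynomial.C (2*(n:ℚ)+1) * NN n (j+1)
      + Polynomial.C (2*(j:ℚ)+3) * (Polynomial.X * NN n (j+1)) + Polynomial.X * NN n j := by
  ext k
  rw [Polynomial.coeff_add, Polynomial.coeff_add, Polynomial.coeff_C_mul,
    Polynomial.coeff_C_mul, coeff_NN, coeff_NN]
  cases k with
  | zero =>
    rw [Polynomial.mul_coeff_zero, Polynomial.coeff_X_zero, Polynomial.mul_coeff_zero,
      Polynomial.coeff_X_zero, zero_mul, zero_mul, mul_zero, add_zero, add_zero]
    simp only [Nat.zero_le, if_true]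
    rw [stirlingB2_zero_succ]
    push_cast; ring
  | succ k =>
    rw [Polynomial.coeff_X_mul, Polynomial.coeff_X_mul, coeff_NN, coeff_NN]
    have hrec : (stirlingB2 (k+1) (j+1) : ℚ)
        = (2*(j:ℚ)+3) * (stirlingB2 k (j+1) : ℚ) + (stirlingB2 k j : ℚ) := by
      rw [stirlingB2_succ]; push_cast; ring
    rcases Nat.lt_or_ge k n with hk | hk
    · rw [if_pos (by omega : k + 1 ≤ n + 1), if_pos (by omega : k + 1 ≤ n),
        if_pos (by omega : k ≤ n), if_pos (by omega : k ≤ n)]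
      have : stirlingB1 (n+1) (k+1) = (2*n+1) * stirlingB1 n (k+1) + stirlingB1 n k := rfl
      rw [this, hrec]
      push_cast; ring
    · rcases Nat.eq_or_lt_of_le hk with hk' | hk'
      · rw [if_pos (by omega : k+1 ≤ n+1), if_neg (by omega : ¬ (k+1 ≤ n)),
          if_pos (by omega : k ≤ n), if_pos (by omega : k ≤ n)]
        have : stirlingB1 (n+1) (k+1) = (2*n+1) * stirlingB1 n (k+1) + stirlingB1 n k := rfl
        rw [this, stirlingB1_eq_zero (by omega : n < k+1), hrec]
        push_cast; ring
      · rw [if_neg (by omega), if_neg (by omega), if_neg (by omega), if_neg (by omega)]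
        ring
def cc (n j : ℕ) : ℚ := ((2 ^ j * j.factorial : ℕ) : ℚ) / ((2 ^ n * n.factorial : ℕ) : ℚ)

lemma cc_denom_ne (n j : ℕ) : cc n j ≠ 0 := by
  unfold cc
  apply div_ne_zero <;> push_cast <;> positivity

lemma cc_succ_left (n j : ℕ) : 2 * ((n : ℚ) + 1) * cc (n+1) j = cc n j := by
  unfold cc
  rw [Nat.factorial_succ, pow_succ]
  push_cast
  have h1 : ((n:ℚ) + 1) ≠ 0 := by positivity
  have h2 : ((n.factorial : ℚ)) ≠ 0 := by exact_mod_cast n.factorial_ne_zero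
  have h3 : ((2:ℚ) ^ n) ≠ 0 := by positivity
  field_simp

lemma cc_succ_right (n j : ℕ) : cc n (j+1) = (2 * (j:ℚ) + 2) * cc n j := by
  unfold cc
  rw [Nat.factorial_succ, pow_succ]
  push_cast
  ring

lemma FF_eq : ∀ n j : ℕ, FF n j = Polynomial.C (cc n j) * NN n j := by
  intro n
  induction n with
  | zero =>
    intro j
    have hg : PowerSeries.constantCoeff gg = 0 := by
      rw [← PowerSeries.coeff_zero_eq_constantCoeff, coeff_gg]; simp
    have hh0 : PowerSeries.constantCoeff hh = 1 := by
      rw [← PowerSeries.coeff_zero_eq_constantCoeff, coeff_hh, QQ_zero]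
    have hF : FF 0 j = 0 ^ j * 1 := by
      rw [FF, PowerSeries.coeff_zero_eq_constantCoeff, map_mul, map_pow, hg, hh0]
    have hN : NN 0 j = Polynomial.C ((stirlingB2 0 j : ℚ)) := by
      rw [NN, Finset.sum_range_one]
      have : stirlingB1 0 0 = 1 := rfl
      rw [this]
      push_cast
      rw [one_mul, Polynomial.monomial_zero_left]
    cases j with
    | zero =>
      rw [hF, hN]
      have h2 : stirlingB2 0 0 = 1 := stirlingB2_zero 0
      rw [h2]
      have : cc 0 0 = 1 := by unfold cc; norm_num
      rw [this]
      norm_num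
    | succ j =>
      rw [hF, hN, stirlingB2_zero_succ]
      simp
  | succ n ih =>
    intro j
    have hCne : (Polynomial.C (2 * ((n:ℚ) + 1)) : Polynomial ℚ) ≠ 0 := by
      rw [Ne, Polynomial.C_eq_zero]
      positivity
    apply mul_left_cancel₀ hCne
    rw [← mul_assoc, ← Polynomial.C_mul, cc_succ_left]
    cases j with
    | zero =>
      rw [NN_succ_zero]
      have h := Frec0 n
      rw [ih 0] at h
      simp only [map_add, map_mul, map_one, map_ofNat, Polynomial.C_eq_natCast] at *
      linear_combination h
    | succ j =>
      rw [NN_succ_succ]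
      have h := Frec n j
      rw [ih (j+1), ih j] at h
      simp only [nsmul_eq_mul] at h
      push_cast at h
      have hC2 : Polynomial.C (cc n (j+1))
          = (2 * ((j : Polynomial ℚ)) + 2) * Polynomial.C (cc n j) := by
        rw [cc_succ_right]
        simp [map_add, map_mul, map_ofNat, Polynomial.C_eq_natCast]
      simp only [map_add, map_mul, map_one, map_ofNat, Polynomial.C_eq_natCast] at *
      linear_combination h - (Polynomial.X * NN n j) * hC2
lemma prod_if_eq (j : ℕ) :
    (∏ i : Fin (j+1), (if (i : ℕ) < j then gg else hh)) = gg ^ j * hh := by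
  rw [Fin.prod_univ_castSucc]
  simp only [Fin.coe_castSucc, Fin.is_lt, if_true, Fin.val_last, lt_irrefl, if_false]
  rw [Finset.prod_const, Finset.card_univ, Fintype.card_fin]

lemma coeff_prod_tuple (n j : ℕ) (G : Fin (j+1) → R') :
    (PowerSeries.coeff n) (∏ i : Fin (j+1), G i)
      = ∑ l ∈ Finset.Nat.antidiagonalTuple (j+1) n,
          ∏ i : Fin (j+1), (PowerSeries.coeff (l i)) (G i) := by
  classical
  rw [PowerSeries.coeff_prod]
  refine Finset.sum_nbij' (i := fun l => (l : Fin (j+1) → ℕ))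
    (j := fun x => Finsupp.equivFunOnFinite.symm x) ?_ ?_ ?_ ?_ ?_
  · intro a ha
    rw [Finset.mem_finsuppAntidiag] at ha
    rw [Finset.Nat.mem_antidiagonalTuple]
    exact ha.1
  · intro x hx
    rw [Finset.Nat.mem_antidiagonalTuple] at hx
    rw [Finset.mem_finsuppAntidiag]
    constructor
    · rw [← hx]
      apply Finset.sum_congr rfl
      intro i _
      rfl
    · exact Finset.subset_univ _
  · intro a _
    exact Finsupp.equivFunOnFinite_symm_coe a
  · intro x _
    rfl
  · intro a _
    rfl

lemma sum_eq_FF (n j : ℕ) :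
    (∑ l ∈ (Finset.Nat.antidiagonalTuple (j + 1) n).filter
        (fun l => ∀ i : Fin (j + 1), (i : ℕ) < j → 0 < l i),
      ∏ i : Fin (j + 1), (if (i : ℕ) < j then PP (l i) else QQ (l i))) = FF n j := by
  classical
  rw [FF, ← prod_if_eq j, coeff_prod_tuple]
  have hterm : ∀ l : Fin (j+1) → ℕ, ∀ i : Fin (j+1),
      (PowerSeries.coeff (l i)) (if (i : ℕ) < j then gg else hh)
        = if (i : ℕ) < j then (if l i = 0 then 0 else PP (l i)) else QQ (l i) := by
    intro l i
    by_cases hi : (i : ℕ) < j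
    · rw [if_pos hi, if_pos hi, coeff_gg]
    · rw [if_neg hi, if_neg hi, coeff_hh]
  rw [Finset.sum_congr rfl (fun l _ => Finset.prod_congr rfl (fun i _ => hterm l i))]
  apply Finset.sum_subset_zero_on_sdiff (Finset.filter_subset _ _)
  · intro l hl
    rw [Finset.mem_sdiff, Finset.mem_filter] at hl
    have : ∃ i : Fin (j+1), (i : ℕ) < j ∧ l i = 0 := by
      by_contra hcon
      push_neg at hcon
      exact hl.2 ⟨hl.1, fun i hi => Nat.pos_of_ne_zero (hcon i hi)⟩
    obtain ⟨i, hij, hi0⟩ := this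
    apply Finset.prod_eq_zero (Finset.mem_univ i)
    rw [if_pos hij, if_pos hi0]
  · intro l hl
    rw [Finset.mem_filter] at hl
    apply Finset.prod_congr rfl
    intro i _
    by_cases hi : (i : ℕ) < j
    · rw [if_pos hi, if_pos hi, if_neg (Nat.pos_iff_ne_zero.mp (hl.2 i hi))]
    · rw [if_neg hi, if_neg hi]
end

/-- The sum, over all compositions `l_1+⋯+l_{j+1} = n` with `l_1,…,l_j ≥ 1` and
`l_{j+1} ≥ 0`, of the coefficient of `t^k` in
`(t^{(l_1)}/l_1!)⋯(t^{(l_j)}/l_j!)·[(t+1)(t+3)⋯(t+2l_{j+1}−1)/(2^{l_{j+1}} l_{j+1}!)]`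
equals `(2^j j!)/(2^n n!)·B(n,k)·S_B(k,j)`. -/
theorem sum_coeff_risingFactorials_typeB (n j k : ℕ) (hj : j ≤ n) (hk : k ≤ n) :
    (∑ l ∈ (Finset.Nat.antidiagonalTuple (j + 1) n).filter
        (fun l => ∀ i : Fin (j + 1), (i : ℕ) < j → 0 < l i),
      (∏ i : Fin (j + 1),
        if (i : ℕ) < j then
          Polynomial.C (((l i).factorial : ℚ)⁻¹) *
            ∏ m ∈ Finset.range (l i), (Polynomial.X + (m : Polynomial ℚ))
        else
          Polynomial.C (((2 ^ l i * (l i).factorial : ℕ) : ℚ)⁻¹) *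
            ∏ m ∈ Finset.range (l i), (Polynomial.X + ((2 * m + 1 : ℕ) : Polynomial ℚ))).coeff
        k) =
    ((2 ^ j * j.factorial : ℕ) : ℚ) / ((2 ^ n * n.factorial : ℕ) : ℚ) *
      (stirlingB1 n k : ℚ) * (stirlingB2 k j : ℚ) := by

  have h := sum_eq_FF n j
  simp only [PP, QQ] at h
  rw [← Polynomial.finset_sum_coeff, h, FF_eq, Polynomial.coeff_C_mul, coeff_NN, if_pos hk]
  rw [cc, mul_assoc]
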